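/- arXiv:2603.10243 — 2 statements merged into one kernel-verified Lean document; each statement's English description precedes it below -/
import Mathlib

section
/- Let p and q be probability mass functions on a finite set S with q(s) > 0 whenever p(s) > 0. Define the total variation distance TV(p,q) = (1/2)·Σ_{s∈S} |p(s) − q(s)|. Then Pinsker's inequality holds: TV(p,q) ≤ sqrt((1/2)·D_KL(p ‖ q)), where D_KL uses the natural logarithm. -/
/-- KL divergence of finitely supported pmfs (as real-valued functions),
with the convention `0 * log (0/q) = 0`. -/
noncomputable def KL {S : Type*} [Fintype S] (p q : S → ℝ) : ℝ :=
  ∑ s, if 0 < p s then p s * Real.log (p s / q s) else 0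

/-- Total variation distance between finitely supported pmfs. -/
noncomputable def TV {S : Type*} [Fintype S] (p q : S → ℝ) : ℝ :=
  (1 / 2) * ∑ s, |p s - q s|

open Real

/-- `g(t) = t log t - t + 1 - (3/2)(t-1)²/(t+2)` -/
noncomputable def auxG (t : ℝ) : ℝ := t * Real.log t - t + 1 - 3/2 * ((t-1)^2 / (t+2))

/-- derivative of `auxG` -/
noncomputable def auxG' (t : ℝ) : ℝ := Real.log t - 3/2 * ((t-1)*(t+5) / (t+2)^2)

lemma hasDerivAt_auxG {x : ℝ} (hx : 0 < x) : HasDerivAt auxG (auxG' x) x := by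
  have h2 : x + 2 ≠ 0 := by linarith
  have h1 : HasDerivAt (fun t : ℝ => t * Real.log t) (Real.log x + 1) x :=
    Real.hasDerivAt_mul_log hx.ne'
  have hnum : HasDerivAt (fun t : ℝ => (t-1)^2) (2*(x-1)) x := by
    have := ((hasDerivAt_id x).sub_const 1).fun_pow 2
    simpa using this
  have hden : HasDerivAt (fun t : ℝ => t + 2) 1 x := (hasDerivAt_id x).add_const 2
  have hq : HasDerivAt (fun t : ℝ => (t-1)^2/(t+2))
      ((2*(x-1)*(x+2) - (x-1)^2*1)/(x+2)^2) x := hnum.div hden h2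
  have : HasDerivAt auxG (Real.log x + 1 - 1 + 0 - 3/2 * ((2*(x-1)*(x+2) - (x-1)^2*1)/(x+2)^2)) x := by
    unfold auxG
    exact (((h1.sub (hasDerivAt_id x)).add_const 1).sub (hq.const_mul (3/2))).congr_deriv (by ring)
  refine this.congr_deriv ?_
  unfold auxG'
  field_simp
  ring

lemma hasDerivAt_auxG' {x : ℝ} (hx : 0 < x) :
    HasDerivAt auxG' (x⁻¹ - 27/(x+2)^3) x := by
  have h2 : x + 2 ≠ 0 := by linarith
  have h1 : HasDerivAt Real.log x⁻¹ x := Real.hasDerivAt_log hx.ne'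
  have hnum : HasDerivAt (fun t : ℝ => (t-1)*(t+5)) ((x+5)+(x-1)) x := by
    have := ((hasDerivAt_id x).sub_const 1).fun_mul ((hasDerivAt_id x).add_const 5)
    simpa [mul_comm] using this
  have hden : HasDerivAt (fun t : ℝ => (t+2)^2) (2*(x+2)) x := by
    have := ((hasDerivAt_id x).add_const 2).fun_pow 2
    simpa using this
  have hq : HasDerivAt (fun t : ℝ => (t-1)*(t+5)/(t+2)^2)
      ((((x+5)+(x-1))*(x+2)^2 - (x-1)*(x+5)*(2*(x+2)))/((x+2)^2)^2) x :=
    hnum.div hden (pow_ne_zero 2 h2)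
  have : HasDerivAt auxG'
      (x⁻¹ - 3/2 * ((((x+5)+(x-1))*(x+2)^2 - (x-1)*(x+5)*(2*(x+2)))/((x+2)^2)^2)) x :=
    h1.sub (hq.const_mul (3/2))
  refine this.congr_deriv ?_
  field_simp
  ring

lemma auxG'_mono : MonotoneOn auxG' (Set.Ioi (0:ℝ)) := by
  have hint : interior (Set.Ioi (0:ℝ)) = Set.Ioi 0 := isOpen_Ioi.interior_eq
  apply monotoneOn_of_deriv_nonneg (convex_Ioi 0)
  · intro x hx
    exact (hasDerivAt_auxG' hx).continuousAt.continuousWithinAt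
  · rw [hint]
    intro x hx
    exact (hasDerivAt_auxG' hx).differentiableAt.differentiableWithinAt
  · rw [hint]
    intro x hx
    rw [(hasDerivAt_auxG' hx).deriv]
    rw [Set.mem_Ioi] at hx
    have h2 : (0:ℝ) < (x+2)^3 := by positivity
    rw [sub_nonneg, inv_eq_one_div, div_le_div_iff₀ h2 hx]
    nlinarith [sq_nonneg (x-1)]

lemma auxG'_one : auxG' 1 = 0 := by
  unfold auxG'
  norm_num

lemma auxG_one : auxG 1 = 0 := by
  unfold auxG
  norm_num

lemma auxG_nonneg {t : ℝ} (ht : 0 ≤ t) : 0 ≤ auxG t := by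
  rcases le_or_gt 1 t with h1 | h1
  · -- monotone on [1, ∞)
    have hmono : MonotoneOn auxG (Set.Ici (1:ℝ)) := by
      have hint : interior (Set.Ici (1:ℝ)) = Set.Ioi 1 := interior_Ici
      apply monotoneOn_of_deriv_nonneg (convex_Ici 1)
      · intro x hx
        have hx0 : (0:ℝ) < x := lt_of_lt_of_le one_pos hx
        exact (hasDerivAt_auxG hx0).continuousAt.continuousWithinAt
      · rw [hint]; intro x hx
        exact (hasDerivAt_auxG (lt_trans one_pos hx)).differentiableAt.differentiableWithinAt
      · rw [hint]; intro x hx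
        rw [(hasDerivAt_auxG (lt_trans one_pos hx)).deriv]
        have := auxG'_mono (Set.mem_Ioi.mpr one_pos) (Set.mem_Ioi.mpr (lt_trans one_pos hx)) (le_of_lt hx)
        rw [auxG'_one] at this
        exact this
    have := hmono (Set.mem_Ici.mpr le_rfl) (Set.mem_Ici.mpr h1) h1
    rwa [auxG_one] at this
  · -- antitone on [0, 1]
    have hanti : AntitoneOn auxG (Set.Icc (0:ℝ) 1) := by
      have hint : interior (Set.Icc (0:ℝ) 1) = Set.Ioo 0 1 := interior_Icc
      apply antitoneOn_of_deriv_nonpos (convex_Icc 0 1)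
      · -- continuity on [0,1]
        apply ContinuousOn.sub
        apply ContinuousOn.add
        apply ContinuousOn.sub
        · exact Real.continuous_mul_log.continuousOn
        · exact continuousOn_id
        · exact continuousOn_const
        · apply ContinuousOn.mul continuousOn_const
          apply ContinuousOn.div
          · fun_prop
          · fun_prop
          · intro x hx; have := hx.1; intro h; linarith [(by linarith : (0:ℝ) < x + 2)]
      · rw [hint]; intro x hx
        exact (hasDerivAt_auxG hx.1).differentiableAt.differentiableWithinAt
      · rw [hint]; intro x hx
        rw [(hasDerivAt_auxG hx.1).deriv]
        have := auxG'_mono (Set.mem_Ioi.mpr hx.1) (Set.mem_Ioi.mpr one_pos) (le_of_lt hx.2)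
        rw [auxG'_one] at this
        exact this
    have := hanti (Set.mem_Icc.mpr ⟨ht, le_of_lt h1⟩) (Set.mem_Icc.mpr ⟨zero_le_one, le_rfl⟩) (le_of_lt h1)
    rwa [auxG_one] at this

lemma pointwise_bound {a b : ℝ} (ha : 0 ≤ a) (hb : 0 ≤ b) (hab : 0 < a → 0 < b) :
    3/2 * ((a-b)^2 / (a+2*b)) ≤ (if 0 < a then a * Real.log (a/b) else 0) + b - a := by
  rcases eq_or_lt_of_le hb with hb0 | hb0
  · -- b = 0, hence a = 0
    have ha0 : a = 0 := by
      by_contra h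
      have : 0 < a := lt_of_le_of_ne ha (Ne.symm h)
      exact absurd (hab this) (by rw [← hb0]; exact lt_irrefl 0)
    simp [ha0, ← hb0]
  · have hfact : (if 0 < a then a * Real.log (a/b) else 0) = a * Real.log (a/b) := by
      rcases eq_or_lt_of_le ha with ha0 | ha0
      · simp [← ha0]
      · simp [ha0]
    rw [hfact]
    have hg := auxG_nonneg (t := a/b) (by positivity)
    unfold auxG at hg
    have h2 : a/b + 2 ≠ 0 := by positivity
    have hab2 : (0:ℝ) < a + 2*b := by linarith
    have e1 : a * Real.log (a/b) + b - a = b * ((a/b) * Real.log (a/b) - a/b + 1) := by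
      field_simp
      ring
    have e2 : 3/2 * ((a-b)^2 / (a+2*b)) = b * (3/2 * ((a/b-1)^2 / (a/b+2))) := by
      field_simp
    rw [e1, e2]
    have := mul_le_mul_of_nonneg_left (by linarith : 3/2 * ((a/b-1)^2/(a/b+2)) ≤ (a/b) * Real.log (a/b) - a/b + 1) hb
    exact this

theorem pinsker_inequality
    {S : Type*} [Fintype S] (p q : S → ℝ)
    (hp0 : ∀ s, 0 ≤ p s) (hp1 : ∑ s, p s = 1)
    (hq0 : ∀ s, 0 ≤ q s) (hq1 : ∑ s, q s = 1)
    (hac : ∀ s, 0 < p s → 0 < q s) :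
    TV p q ≤ Real.sqrt ((1 / 2) * KL p q) := by
  classical
  set W : ℝ := ∑ s, (p s - q s)^2 / (p s + 2 * q s) with hW
  -- step 1 : (3/2) * W ≤ KL p q
  have step1 : 3/2 * W ≤ KL p q := by
    have hsum : ∑ s, ((if 0 < p s then p s * Real.log (p s / q s) else 0) + q s - p s)
        = KL p q := by
      rw [show (fun s => (if 0 < p s then p s * Real.log (p s / q s) else 0) + q s - p s)
          = (fun s => (if 0 < p s then p s * Real.log (p s / q s) else 0) + (q s - p s)) from by
        funext s; ring]
      rw [Finset.sum_add_distrib, Finset.sum_sub_distrib, hp1, hq1, KL]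
      ring
    calc 3/2 * W = ∑ s, 3/2 * ((p s - q s)^2 / (p s + 2 * q s)) := by
          rw [hW, Finset.mul_sum]
      _ ≤ ∑ s, ((if 0 < p s then p s * Real.log (p s / q s) else 0) + q s - p s) := by
          apply Finset.sum_le_sum
          intro s _
          exact pointwise_bound (hp0 s) (hq0 s) (hac s)
      _ = KL p q := hsum
  -- step 2 : Cauchy-Schwarz : (∑ |p - q|)^2 ≤ 3 * W
  have step2 : (∑ s, |p s - q s|)^2 ≤ W * 3 := by
    have hCS := Finset.sum_mul_sq_le_sq_mul_sq Finset.univ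
      (fun s => |p s - q s| / Real.sqrt (p s + 2 * q s))
      (fun s => Real.sqrt (p s + 2 * q s))
    have hfg : ∀ s : S, |p s - q s| / Real.sqrt (p s + 2 * q s) * Real.sqrt (p s + 2 * q s)
        = |p s - q s| := by
      intro s
      rcases eq_or_lt_of_le (by nlinarith [hp0 s, hq0 s] : (0:ℝ) ≤ p s + 2 * q s) with h | h
      · have hp' : p s = 0 := by nlinarith [hp0 s, hq0 s]
        have hq' : q s = 0 := by nlinarith [hp0 s, hq0 s]
        simp [hp', hq']
      · exact div_mul_cancel₀ _ (Real.sqrt_ne_zero'.mpr h)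
    have hf2 : ∀ s : S, (|p s - q s| / Real.sqrt (p s + 2 * q s))^2
        = (p s - q s)^2 / (p s + 2 * q s) := by
      intro s
      rw [div_pow, sq_abs, Real.sq_sqrt (by nlinarith [hp0 s, hq0 s])]
    have hg2 : ∀ s : S, (Real.sqrt (p s + 2 * q s))^2 = p s + 2 * q s := by
      intro s
      exact Real.sq_sqrt (by nlinarith [hp0 s, hq0 s])
    rw [show (∑ s, |p s - q s|) = ∑ s, |p s - q s| / Real.sqrt (p s + 2 * q s) * Real.sqrt (p s + 2 * q s) from
      (Finset.sum_congr rfl fun s _ => (hfg s).symm)]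
    calc (∑ s, |p s - q s| / Real.sqrt (p s + 2 * q s) * Real.sqrt (p s + 2 * q s))^2
        ≤ (∑ s, (|p s - q s| / Real.sqrt (p s + 2 * q s))^2) * ∑ s, (Real.sqrt (p s + 2 * q s))^2 := hCS
      _ = W * 3 := by
          congr 1
          · rw [hW]; exact Finset.sum_congr rfl fun s _ => hf2 s
          · rw [Finset.sum_congr rfl fun s _ => hg2 s, Finset.sum_add_distrib, hp1, ← Finset.mul_sum, hq1]
            norm_num
  -- conclude
  have hT0 : 0 ≤ ∑ s, |p s - q s| := Finset.sum_nonneg fun s _ => abs_nonneg _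
  have hTV0 : 0 ≤ TV p q := by rw [TV]; positivity
  rw [Real.le_sqrt hTV0 (by nlinarith : (0:ℝ) ≤ 1/2 * KL p q)]
  rw [TV]
  nlinarith
end

section
/- Let p, q be pmfs on a finite set S with q(s) > 0 for all s in the support of p. Then TV(p,q) ≤ sqrt(1 − exp(−D_KL(p ‖ q))), and hence also TV(p,q) ≤ sqrt(D_KL(p ‖ q)) (a weaker but simpler Pinsker-type bound, since 1 − e^{−t} ≤ t for t ≥ 0). -/
theorem bretagnolle_huber
    {S : Type*} [Fintype S] (p q : S → ℝ)
    (hp0 : ∀ s, 0 ≤ p s) (hp1 : ∑ s, p s = 1)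
    (hq0 : ∀ s, 0 ≤ q s) (hq1 : ∑ s, q s = 1)
    (hac : ∀ s, 0 < p s → 0 < q s) :
    TV p q ≤ Real.sqrt (1 - Real.exp (-(KL p q))) ∧
    TV p q ≤ Real.sqrt (KL p q) := by
  classical
  set t : Finset S := Finset.univ.filter (fun s => 0 < p s) with ht
  have hpt : ∀ s ∈ t, 0 < p s := fun s hs => (Finset.mem_filter.mp hs).2
  have hqt : ∀ s ∈ t, 0 < q s := fun s hs => hac s (hpt s hs)
  -- weights sum to 1 on the support
  have hsum_t : ∑ s ∈ t, p s = 1 := by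
    rw [← hp1]
    apply Finset.sum_subset (Finset.subset_univ t)
    intro x _ hx
    simp only [ht, Finset.mem_filter, Finset.mem_univ, true_and] at hx
    push_neg at hx
    linarith [hp0 x]
  have htne : t.Nonempty := by
    by_contra h
    rw [Finset.not_nonempty_iff_eq_empty] at h
    rw [h, Finset.sum_empty] at hsum_t
    norm_num at hsum_t
  set A : ℝ := ∑ s ∈ t, min (p s) (q s) with hA
  set B : ℝ := ∑ s ∈ t, max (p s) (q s) with hB
  have hApos : 0 < A := Finset.sum_pos
    (fun s hs => lt_min (hpt s hs) (hqt s hs)) htne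
  have hBpos : 0 < B := Finset.sum_pos
    (fun s hs => lt_max_of_lt_left (hpt s hs)) htne
  -- Jensen for log
  have jensen : ∀ x : S → ℝ, (∀ s ∈ t, 0 < x s) →
      ∑ s ∈ t, p s * Real.log (x s / p s) ≤ Real.log (∑ s ∈ t, x s) := by
    intro x hx
    have := strictConcaveOn_log_Ioi.concaveOn.le_map_sum
      (t := t) (w := p) (p := fun s => x s / p s)
      (fun s hs => (hpt s hs).le) hsum_t
      (fun s hs => Set.mem_Ioi.mpr (div_pos (hx s hs) (hpt s hs)))
    simp only [smul_eq_mul] at this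
    refine this.trans_eq ?_
    congr 1
    apply Finset.sum_congr rfl
    intro s hs
    rw [mul_comm]; exact div_mul_cancel₀ (x s) (hpt s hs).ne'
  have hKLt : KL p q = ∑ s ∈ t, p s * Real.log (p s / q s) := by
    rw [KL, ht, Finset.sum_filter]
  -- key: exp(-KL) ≤ A * B
  have hkey : Real.exp (-(KL p q)) ≤ A * B := by
    have hsplit : -(KL p q) =
        (∑ s ∈ t, p s * Real.log (min (p s) (q s) / p s)) +
        (∑ s ∈ t, p s * Real.log (max (p s) (q s) / p s)) := by
      rw [hKLt, ← Finset.sum_add_distrib, ← Finset.sum_neg_distrib]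
      apply Finset.sum_congr rfl
      intro s hs
      have hp := hpt s hs
      have hq := hqt s hs
      have hmin : (0:ℝ) < min (p s) (q s) := lt_min hp hq
      have hmax : (0:ℝ) < max (p s) (q s) := lt_max_of_lt_left hp
      have h1 : min (p s) (q s) / p s * (max (p s) (q s) / p s) = q s / p s := by
        rw [div_mul_div_comm, min_mul_max]
        rw [mul_comm (p s) (q s), mul_div_mul_right _ _ hp.ne']
      rw [← mul_add, ← Real.log_mul (div_pos hmin hp).ne' (div_pos hmax hp).ne', h1,
        Real.log_div hq.ne' hp.ne', Real.log_div hp.ne' hq.ne']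
      ring
    have h2 : -(KL p q) ≤ Real.log A + Real.log B := by
      rw [hsplit]
      exact add_le_add (jensen _ (fun s hs => lt_min (hpt s hs) (hqt s hs)))
        (jensen _ (fun s hs => lt_max_of_lt_left (hpt s hs)))
    calc Real.exp (-(KL p q)) ≤ Real.exp (Real.log A + Real.log B) :=
          Real.exp_le_exp.mpr h2
      _ = A * B := by rw [Real.exp_add, Real.exp_log hApos, Real.exp_log hBpos]
  -- sums of min and max over the whole space
  have hmin_sum : ∑ s, min (p s) (q s) = 1 - TV p q := by
    have : ∀ s : S, min (p s) (q s) = (p s + q s - |p s - q s|) / 2 := by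
      intro s
      rcases le_total (p s) (q s) with h | h
      · rw [min_eq_left h, abs_of_nonpos (by linarith)]; ring
      · rw [min_eq_right h, abs_of_nonneg (by linarith)]; ring
    simp only [this]
    rw [TV, ← Finset.sum_div, Finset.sum_sub_distrib, Finset.sum_add_distrib, hp1, hq1]
    ring
  have hmax_sum : ∑ s, max (p s) (q s) = 1 + TV p q := by
    have : ∀ s : S, max (p s) (q s) = (p s + q s + |p s - q s|) / 2 := by
      intro s
      rcases le_total (p s) (q s) with h | h
      · rw [max_eq_right h, abs_of_nonpos (by linarith)]; ring
      · rw [max_eq_left h, abs_of_nonneg (by linarith)]; ring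
    simp only [this]
    rw [TV, ← Finset.sum_div, Finset.sum_add_distrib, Finset.sum_add_distrib, hp1, hq1]
    ring
  have hAle : A ≤ 1 - TV p q := by
    rw [← hmin_sum]
    exact Finset.sum_le_sum_of_subset_of_nonneg (Finset.subset_univ t)
      (fun s _ _ => le_min (hp0 s) (hq0 s))
  have hBle : B ≤ 1 + TV p q := by
    rw [← hmax_sum]
    exact Finset.sum_le_sum_of_subset_of_nonneg (Finset.subset_univ t)
      (fun s _ _ => le_max_of_le_left (hp0 s))
  have hTV0 : 0 ≤ TV p q := by
    rw [TV]
    positivity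
  have hmain : Real.exp (-(KL p q)) ≤ 1 - (TV p q) ^ 2 := by
    have h1mTV : 0 ≤ 1 - TV p q := le_trans hApos.le hAle
    calc Real.exp (-(KL p q)) ≤ A * B := hkey
      _ ≤ (1 - TV p q) * (1 + TV p q) :=
          mul_le_mul hAle hBle hBpos.le h1mTV
      _ = 1 - (TV p q) ^ 2 := by ring
  have hsq : TV p q ^ 2 ≤ 1 - Real.exp (-(KL p q)) := by linarith
  have h1 : TV p q ≤ Real.sqrt (1 - Real.exp (-(KL p q))) :=
    (Real.le_sqrt hTV0 (by linarith [sq_nonneg (TV p q)])).mpr hsq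
  refine ⟨h1, h1.trans (Real.sqrt_le_sqrt ?_)⟩
  have := Real.add_one_le_exp (-(KL p q))
  linarith
end
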